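/- Let G₁ * ⋯ * Gₙ be the free profinite product of profinite groups, and for each i let Hᵢ ≤ Gᵢ be a closed subgroup. Then the closed subgroup of G₁ * ⋯ * Gₙ generated by the images of H₁, …, Hₙ is (canonically isomorphic to) the free profinite product H₁ * ⋯ * Hₙ. -/

import Mathlib

/-- `G` together with the embeddings `ε i : Gf i →* G` is the free profinite product of the
profinite groups `Gf i`: every family of continuous homomorphisms into a profinite group
factors uniquely through `G`. -/
def IsFreeProfiniteProduct {n : ℕ} (Gf : Fin n → Type u)
    [∀ i, Group (Gf i)] [∀ i, TopologicalSpace (Gf i)]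
    (G : Type u) [Group G] [TopologicalSpace G] (ε : ∀ i, Gf i →* G) : Prop :=
  (∀ i, Continuous (ε i)) ∧ (∀ i, Function.Injective (ε i)) ∧
  ∀ (H : Type u) (_ : Group H) (_ : TopologicalSpace H) (_ : IsTopologicalGroup H)
    (_ : CompactSpace H) (_ : T2Space H) (_ : TotallyDisconnectedSpace H)
    (γ : ∀ i, Gf i →* H), (∀ i, Continuous (γ i)) →
      ∃! δ : G →* H, Continuous δ ∧ ∀ i, δ.comp (ε i) = γ i


universe u

open scoped Pointwise

/-- In a profinite group, every open neighborhood of 1 contains an open normal subgroup. -/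
lemma aux_exists_openNormal {G : Type*} [Group G] [TopologicalSpace G] [IsTopologicalGroup G]
    [CompactSpace G] [T2Space G] [TotallyDisconnectedSpace G] {V : Set G} (hV : IsOpen V)
    (h1 : (1 : G) ∈ V) :
    ∃ N : Subgroup G, N.Normal ∧ IsOpen (N : Set G) ∧ (N : Set G) ⊆ V := by
  obtain ⟨W, hW, h1W, hWV⟩ := isTopologicalBasis_isClopen.mem_nhds_iff.mp (hV.mem_nhds h1)
  obtain ⟨N, hN⟩ :=
    IsTopologicalGroup.exist_openNormalSubgroup_sub_clopen_nhds_of_one hW h1W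
  exact ⟨N.toSubgroup, N.isNormal', N.toOpenSubgroup.isOpen, hN.trans hWV⟩

/-- A hom to a discrete group whose kernel contains an open subgroup is continuous. -/
lemma aux_continuous_of_openKer {G A : Type*} [Group G] [TopologicalSpace G] [IsTopologicalGroup G]
    [Group A] [TopologicalSpace A] [DiscreteTopology A] (f : G →* A) (N : Subgroup G)
    (hNo : IsOpen (N : Set G)) (hker : N ≤ f.ker) : Continuous f := by
  rw [continuous_discrete_rng]
  intro b
  rw [isOpen_iff_mem_nhds]
  intro x hx
  have : x • (N : Set G) ⊆ f ⁻¹' {b} := by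
    rintro - ⟨m, hm, rfl⟩
    simp only [Set.mem_preimage, Set.mem_singleton_iff, smul_eq_mul, map_mul]
    rw [hker hm]
    simpa using hx
  refine Filter.mem_of_superset ?_ this
  exact (hNo.smul x).mem_nhds ⟨1, one_mem _, by simp⟩

/-- A continuous hom from an arbitrary subgroup of a profinite group to a discrete group
extends to the open subgroup `H ⊔ N` for some open normal `N`. -/
lemma aux_extend {G A : Type*} [Group G] [TopologicalSpace G] [IsTopologicalGroup G]
    [CompactSpace G] [T2Space G] [TotallyDisconnectedSpace G]
    [Group A] [TopologicalSpace A] [DiscreteTopology A]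
    (H : Subgroup G) (γ : ↥H →* A) (hγ : Continuous γ) :
    ∃ (N : Subgroup G) (ψ : ↥(H ⊔ N) →* A), N.Normal ∧ IsOpen (N : Set G) ∧
      (∀ x : ↥H, ψ (Subgroup.inclusion le_sup_left x) = γ x) ∧
      (∀ m : G, (hm : m ∈ N) → ψ ⟨m, Subgroup.mem_sup_right hm⟩ = 1) := by
  classical
  have hker : IsOpen ((γ : ↥H → A) ⁻¹' {1}) := (isOpen_discrete _).preimage hγ
  obtain ⟨V, hVopen, hVeq⟩ := isOpen_induced_iff.mp hker
  have h1V : (1 : G) ∈ V := by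
    have h0 : (1 : ↥H) ∈ Subtype.val ⁻¹' V := by
      rw [hVeq]; simp
    simpa using h0
  obtain ⟨N, hNnormal, hNopen, hNV⟩ := aux_exists_openNormal hVopen h1V
  have hHN : ∀ x : ↥H, (x : G) ∈ N → γ x = 1 := by
    intro x hx
    have : x ∈ Subtype.val ⁻¹' V := hNV hx
    rw [hVeq] at this
    simpa using this
  have hwd : ∀ (h h' : G) (hh : h ∈ H) (hh' : h' ∈ H) (m m' : G), m ∈ N → m' ∈ N →
      h * m = h' * m' → γ ⟨h, hh⟩ = γ ⟨h', hh'⟩ := by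
    intro h h' hh hh' m m' hm hm' he
    have h1 : h'⁻¹ * h = m' * m⁻¹ := by
      have hx : h = h' * m' * m⁻¹ := eq_mul_inv_iff_mul_eq.mpr he
      rw [hx]; group
    have h3 : γ ((⟨h', hh'⟩ : ↥H)⁻¹ * ⟨h, hh⟩) = 1 :=
      hHN _ (by show h'⁻¹ * h ∈ N; rw [h1]; exact mul_mem hm' (inv_mem hm))
    rw [map_mul, map_inv, inv_mul_eq_one] at h3
    exact h3.symm
  have hdecomp : ∀ u : ↥(H ⊔ N), ∃ h m : G, h ∈ H ∧ m ∈ N ∧ (u : G) = h * m := by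
    intro u
    have : (u : G) ∈ (H : Set G) * (N : Set G) := by
      rw [← Subgroup.mul_normal H N]; exact u.2
    obtain ⟨h, hh, m, hm, he⟩ := this
    exact ⟨h, m, hh, hm, he.symm⟩
  choose hf mf hhf hmf hef using hdecomp
  refine ⟨N, MonoidHom.mk' (fun u => γ ⟨hf u, hhf u⟩) ?_, hNnormal, hNopen, ?_, ?_⟩
  · intro u v
    rw [← map_mul]
    refine hwd _ _ _ (mul_mem (hhf u) (hhf v)) (mf (u * v))
      (((hf v)⁻¹ * mf u * hf v) * mf v) (hmf _)
      (mul_mem (hNnormal.conj_mem' _ (hmf u) _) (hmf v)) ?_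
    have h5 := hef (u * v)
    push_cast at h5
    rw [hef u, hef v] at h5
    rw [← h5]
    group
  · intro x
    set u : ↥(H ⊔ N) := Subgroup.inclusion (le_sup_left : H ≤ H ⊔ N) x with hu
    show γ ⟨hf u, hhf u⟩ = γ x
    refine (hwd (↑x) (hf u) x.2 (hhf u) 1 (mf u) (one_mem _) (hmf u) ?_).symm
    rw [mul_one, ← hef]
    rfl
  · intro m hm
    show γ ⟨hf _, _⟩ = 1
    apply hHN
    show hf ⟨m, Subgroup.mem_sup_right hm⟩ ∈ N
    have h2 : hf ⟨m, Subgroup.mem_sup_right hm⟩ = m * (mf ⟨m, Subgroup.mem_sup_right hm⟩)⁻¹ :=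
      eq_mul_inv_iff_mul_eq.mpr (hef _).symm
    rw [h2]
    exact mul_mem hm (inv_mem (hmf _))

/-- The statement's universal property specialised to a finite discrete target group. -/
lemma finiteCase {n : ℕ} (Gf : Fin n → Type u) [∀ i, Group (Gf i)] [∀ i, TopologicalSpace (Gf i)]
    [∀ i, IsTopologicalGroup (Gf i)] [∀ i, CompactSpace (Gf i)] [∀ i, T2Space (Gf i)]
    [∀ i, TotallyDisconnectedSpace (Gf i)]
    (G : Type u) [Group G] [TopologicalSpace G] [IsTopologicalGroup G]
    [CompactSpace G] [T2Space G] [TotallyDisconnectedSpace G]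
    (ε : ∀ i, Gf i →* G) (hfree : IsFreeProfiniteProduct Gf G ε)
    (H : ∀ i, Subgroup (Gf i))
    (A : Type u) [Group A] [TopologicalSpace A] [DiscreteTopology A] [Finite A]
    (γ : ∀ i, ↥(H i) →* A) (hγ : ∀ i, Continuous (γ i)) :
    ∃ δ : ↥((⨆ i, (H i).map (ε i)).topologicalClosure) →* A, Continuous δ ∧
      ∀ (i : Fin n) (x : ↥(H i))
        (hx : ε i ↑x ∈ (⨆ i, (H i).map (ε i)).topologicalClosure),
        δ ⟨ε i ↑x, hx⟩ = γ i x := by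
  classical
  choose N ψ hNnormal hNopen hψγ hψN using fun i => aux_extend (H i) (γ i) (hγ i)
  set U : ∀ i, Subgroup (Gf i) := fun i => H i ⊔ N i with hUdef
  have hHU : ∀ i, H i ≤ U i := fun i => le_sup_left
  have hNU : ∀ i, N i ≤ U i := fun i => le_sup_right
  have hUopen : ∀ i, IsOpen (U i : Set (Gf i)) :=
    fun i => Subgroup.isOpen_mono (hNU i) (hNopen i)
  haveI hfin : ∀ i, Finite (Gf i ⧸ U i) :=
    fun i => Subgroup.quotient_finite_of_isOpen _ (hUopen i)
  -- the finite set on which the wreath product acts, and its base point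
  let Ω : Type u := ∀ i, Gf i ⧸ U i
  haveI : Finite Ω := Pi.finite
  let b : Ω := fun i => QuotientGroup.mk 1
  -- a transversal normalised at the base point
  let t : ∀ i, Gf i ⧸ U i → Gf i := fun i ω => if ω = QuotientGroup.mk 1 then 1 else ω.out
  have ht : ∀ i ω, (QuotientGroup.mk (t i ω) : Gf i ⧸ U i) = ω := by
    intro i ω
    show (QuotientGroup.mk (if ω = QuotientGroup.mk 1 then 1 else ω.out) : Gf i ⧸ U i) = ω
    by_cases h : ω = QuotientGroup.mk 1
    · rw [if_pos h, h]
    · rw [if_neg h]; exact QuotientGroup.out_eq' ω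
  have htb : ∀ i, t i (QuotientGroup.mk 1) = 1 := by
    intro i
    show (if (QuotientGroup.mk 1 : Gf i ⧸ U i) = QuotientGroup.mk 1 then 1 else _) = 1
    rw [if_pos rfl]
  -- elements of U fix the base coset, elements of N fix every coset
  have hfixb : ∀ i (u : Gf i), u ∈ U i →
      u • (QuotientGroup.mk 1 : Gf i ⧸ U i) = QuotientGroup.mk 1 := by
    intro i u hu
    rw [MulAction.Quotient.smul_mk, QuotientGroup.eq]
    simpa using inv_mem hu
  have hfixN : ∀ i (m : Gf i), m ∈ N i → ∀ ω : Gf i ⧸ U i, m • ω = ω := by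
    intro i m hm ω
    obtain ⟨x, rfl⟩ := QuotientGroup.mk_surjective ω
    rw [MulAction.Quotient.smul_mk, QuotientGroup.eq]
    have hc : x⁻¹ * m⁻¹ * x ∈ N i := (hNnormal i).conj_mem' _ (inv_mem hm) _
    exact hNU i (by simpa [mul_assoc, mul_inv_rev, smul_eq_mul] using hc)
  -- the cocycle
  have hcmem : ∀ i (g : Gf i) (ω : Gf i ⧸ U i), (t i ω)⁻¹ * g * t i (g⁻¹ • ω) ∈ U i := by
    intro i g ω
    have h1 : (QuotientGroup.mk (t i ω) : Gf i ⧸ U i) = QuotientGroup.mk (g * t i (g⁻¹ • ω)) := by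
      have h2 : (QuotientGroup.mk (g * t i (g⁻¹ • ω)) : Gf i ⧸ U i)
          = g • QuotientGroup.mk (t i (g⁻¹ • ω)) := by
        rw [MulAction.Quotient.smul_mk]; rfl
      rw [ht, h2, ht, smul_inv_smul]
    have h3 := QuotientGroup.eq.mp h1
    simpa [mul_assoc] using h3
  let c : ∀ i, Gf i → (Gf i ⧸ U i) → ↥(U i) :=
    fun i g ω => ⟨(t i ω)⁻¹ * g * t i (g⁻¹ • ω), hcmem i g ω⟩
  have hcoc : ∀ i (g g' : Gf i) (ω : Gf i ⧸ U i),
      c i (g * g') ω = c i g ω * c i g' (g⁻¹ • ω) := by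
    intro i g g' ω
    apply Subtype.ext
    show (t i ω)⁻¹ * (g * g') * t i ((g * g')⁻¹ • ω)
      = ((t i ω)⁻¹ * g * t i (g⁻¹ • ω)) * ((t i (g⁻¹ • ω))⁻¹ * g' * t i (g'⁻¹ • g⁻¹ • ω))
    rw [show (g * g')⁻¹ • ω = g'⁻¹ • g⁻¹ • ω by rw [mul_inv_rev, mul_smul]]
    group
  -- the permutation part
  let π : ∀ i, Gf i →* Equiv.Perm Ω := fun i => MonoidHom.mk'
    (fun g => { toFun := fun v => Function.update v i (g • v i)
                invFun := fun v => Function.update v i (g⁻¹ • v i)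
                left_inv := fun v => by simp
                right_inv := fun v => by simp })
    (by
      intro g g'
      apply Equiv.ext
      intro v
      show Function.update v i ((g * g') • v i) = _
      simp [Equiv.Perm.mul_apply, mul_smul])
  have hπ : ∀ i (g : Gf i) (v : Ω), (π i g) v = Function.update v i (g • v i) := fun _ _ _ => rfl
  have hπsymm : ∀ i (g : Gf i) (v : Ω), (π i g).symm v = Function.update v i (g⁻¹ • v i) :=
    fun _ _ _ => rfl
  -- the wreath product
  let μ : Equiv.Perm Ω →* MulAut (Ω → A) := MonoidHom.mk'
    (fun σ => MulEquiv.arrowCongr σ (MulEquiv.refl A)) (fun σ τ => rfl)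
  let W : Type u := SemidirectProduct (Ω → A) (Equiv.Perm Ω) μ
  let Φ : ∀ i, Gf i →* W := fun i => MonoidHom.mk'
    (fun g => ⟨fun v => ψ i (c i g (v i)), π i g⟩)
    (by
      intro g g'
      refine SemidirectProduct.ext ?_ (map_mul (π i) g g')
      funext v
      show ψ i (c i (g * g') (v i))
        = ψ i (c i g (v i)) * ψ i (c i g' (((π i g).symm v) i))
      rw [hπsymm, Function.update_self, hcoc, map_mul])
  -- Φ kills N, hence is continuous
  have hΦN : ∀ i (m : Gf i), m ∈ N i → Φ i m = 1 := by
    intro i m hm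
    refine SemidirectProduct.ext ?_ ?_
    · funext v
      show ψ i (c i m (v i)) = 1
      have h1 : m⁻¹ • (v i) = v i := hfixN i m⁻¹ (inv_mem hm) _
      have h2 : c i m (v i) = ⟨(t i (v i))⁻¹ * m * t i (v i), Subgroup.mem_sup_right
          ((hNnormal i).conj_mem' _ hm _)⟩ := by
        apply Subtype.ext
        show (t i (v i))⁻¹ * m * t i (m⁻¹ • v i) = (t i (v i))⁻¹ * m * t i (v i)
        rw [h1]
      rw [h2]
      exact hψN i _ ((hNnormal i).conj_mem' _ hm _)
    · show π i m = 1
      apply Equiv.ext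
      intro v
      show Function.update v i (m • v i) = v
      rw [hfixN i m hm (v i), Function.update_eq_self]
  -- W is a finite discrete profinite group
  haveI : Finite W :=
    Finite.of_equiv ((Ω → A) × Equiv.Perm Ω)
      ⟨fun p => ⟨p.1, p.2⟩, fun w => (w.left, w.right), fun p => rfl, fun w => rfl⟩
  letI : TopologicalSpace W := ⊥
  haveI : DiscreteTopology W := ⟨rfl⟩
  haveI : IsTopologicalGroup W :=
    { continuous_mul := continuous_of_discreteTopology
      continuous_inv := continuous_of_discreteTopology }
  haveI : CompactSpace W := Finite.compactSpace
  haveI : T2Space W := DiscreteTopology.toT2Space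
  haveI : TotallyDisconnectedSpace W := by infer_instance
  have hΦcont : ∀ i, Continuous (Φ i) := by
    intro i
    refine aux_continuous_of_openKer (Φ i) (N i) (hNopen i) ?_
    intro m hm
    exact hΦN i m hm
  obtain ⟨Δ, ⟨hΔcont, hΔcomm⟩, -⟩ := hfree.2.2 W inferInstance inferInstance inferInstance inferInstance inferInstance
    inferInstance Φ hΦcont
  -- the stabilizer of the base point and the evaluation homomorphism
  let P : Subgroup W := Subgroup.comap (SemidirectProduct.rightHom)
    (MulAction.stabilizer (Equiv.Perm Ω) b)
  have hsymmb : ∀ w : W, w ∈ P → w.right.symm b = b := by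
    intro w hw
    have h1 : w.right b = b := hw
    exact (Equiv.symm_apply_eq _).mpr h1.symm
  let ρ : ↥P →* A := MonoidHom.mk' (fun w => (w : W).left b) (by
    intro w₁ w₂
    show ((w₁ : W) * (w₂ : W)).left b = (w₁ : W).left b * (w₂ : W).left b
    rw [SemidirectProduct.mul_left]
    show (w₁ : W).left b * (w₂ : W).left ((w₁ : W).right.symm b) = _
    rw [hsymmb _ w₁.2])
  -- Δ maps the closure subgroup into P
  have hΦP : ∀ i (x : Gf i), x ∈ H i → Φ i x ∈ P := by
    intro i x hx
    show (π i x) • b = b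
    show Function.update b i (x • b i) = b
    rw [hfixb i x (hHU i hx), Function.update_eq_self]
  have hclosedP : IsClosed ((Subgroup.comap Δ P : Subgroup G) : Set G) :=
    (isClosed_discrete (P : Set W)).preimage hΔcont
  have hCP : (⨆ i, (H i).map (ε i)).topologicalClosure ≤ Subgroup.comap Δ P := by
    refine Subgroup.topologicalClosure_minimal _ ?_ hclosedP
    refine iSup_le ?_
    intro i
    rw [Subgroup.map_le_iff_le_comap]
    intro x hx
    show Δ (ε i x) ∈ P
    have h1 : Δ (ε i x) = Φ i x := DFunLike.congr_fun (hΔcomm i) x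
    rw [h1]
    exact hΦP i x hx
  -- the desired homomorphism
  refine ⟨ρ.comp (MonoidHom.codRestrict
    (Δ.comp (Subgroup.subtype _)) P
    (fun x => hCP x.2)), ?_, ?_⟩
  · rw [MonoidHom.coe_comp]
    exact Continuous.comp continuous_of_discreteTopology
      ((hΔcont.comp continuous_subtype_val).subtype_mk _)
  · intro i x hx
    show ρ ⟨Δ (ε i ↑x), _⟩ = γ i x
    have h1 : Δ (ε i ↑x) = Φ i ↑x := DFunLike.congr_fun (hΔcomm i) ↑x
    have h2 : (⟨Δ (ε i ↑x), hCP hx⟩ : ↥P) = ⟨Φ i ↑x, hΦP i ↑x x.2⟩ := Subtype.ext h1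
    rw [h2]
    show (Φ i ↑x).left b = γ i x
    show ψ i (c i ↑x (b i)) = γ i x
    have h3 : c i ↑x (b i) = Subgroup.inclusion (hHU i) x := by
      apply Subtype.ext
      show (t i (b i))⁻¹ * ↑x * t i ((↑x)⁻¹ • b i) = ↑x
      have h4 : (↑x)⁻¹ • (b i) = b i := hfixb i _ (inv_mem (hHU i x.2))
      rw [h4]
      show (t i (QuotientGroup.mk 1))⁻¹ * ↑x * t i (QuotientGroup.mk 1) = ↑x
      rw [htb, inv_one, one_mul, mul_one]
    rw [h3]
    exact hψγ i x


/-- Two continuous homs on the closure of a subgroup agreeing on the subgroup are equal. -/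
lemma aux_dense_ext {X K : Type*} [Group X] [TopologicalSpace X] [IsTopologicalGroup X]
    [Group K] [TopologicalSpace K] [T2Space K] (S : Subgroup X)
    (f g : ↥S.topologicalClosure →* K) (hf : Continuous f) (hg : Continuous g)
    (h : ∀ x (hx : x ∈ S), f ⟨x, Subgroup.le_topologicalClosure S hx⟩
      = g ⟨x, Subgroup.le_topologicalClosure S hx⟩) : f = g := by
  ext z
  have hE : IsClosed {w : ↥S.topologicalClosure | f w = g w} := isClosed_eq hf hg
  have hsub : (Subtype.val ⁻¹' (S : Set X) : Set ↥S.topologicalClosure)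
      ⊆ {w | f w = g w} := fun w hw => h ↑w hw
  have hz : z ∈ closure (Subtype.val ⁻¹' (S : Set X) : Set ↥S.topologicalClosure) := by
    rw [closure_subtype]
    have h1 : (Subtype.val '' (Subtype.val ⁻¹' (S : Set X) : Set ↥S.topologicalClosure))
        = (S : Set X) := by
      rw [Set.image_preimage_eq_inter_range, Subtype.range_coe,
        Subgroup.topologicalClosure_coe]
      exact Set.inter_eq_self_of_subset_left subset_closure
    rw [h1, ← Subgroup.topologicalClosure_coe]
    exact z.2
  exact closure_minimal hsub hE hz

set_option maxHeartbeats 1000000 in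
theorem stmt18 {n : ℕ} (Gf : Fin n → Type u)
    [∀ i, Group (Gf i)] [∀ i, TopologicalSpace (Gf i)]
    [∀ i, IsTopologicalGroup (Gf i)] [∀ i, CompactSpace (Gf i)] [∀ i, T2Space (Gf i)]
    [∀ i, TotallyDisconnectedSpace (Gf i)]
    (G : Type u) [Group G] [TopologicalSpace G] [IsTopologicalGroup G]
    [CompactSpace G] [T2Space G] [TotallyDisconnectedSpace G]
    (ε : ∀ i, Gf i →* G) (hfree : IsFreeProfiniteProduct Gf G ε)
    -- closed subgroups `H i ≤ Gf i`:
    (H : ∀ i, Subgroup (Gf i)) (hclosed : ∀ i, IsClosed ((H i : Subgroup (Gf i)) : Set (Gf i))) :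
    -- the closed subgroup of `G` generated by the images of the `H i`, together with
    -- the (corestricted) embeddings of the `H i`, is the free profinite product of
    -- the `H i`:
    IsFreeProfiniteProduct (fun i => ↥(H i))
      ↥((⨆ i, (H i).map (ε i)).topologicalClosure)
      (fun i => MonoidHom.codRestrict ((ε i).comp (H i).subtype)
        ((⨆ i, (H i).map (ε i)).topologicalClosure)
        (fun x => Subgroup.le_topologicalClosure _
          (Subgroup.mem_iSup_of_mem i (Subgroup.mem_map_of_mem (ε i) x.2)))) := by
  classical
  refine ⟨fun i => ?_, fun i => ?_, ?_⟩
  · exact ((hfree.1 i).comp continuous_subtype_val).subtype_mk _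
  · intro x y hxy
    exact Subtype.ext (hfree.2.1 i (congrArg Subtype.val hxy))
  · intro K iG iT iTG iC iT2 iTD γ hγ
    set S : Subgroup G := ⨆ i, (H i).map (ε i) with hSdef
    let η : ∀ i, ↥(H i) →* G × K := fun i => ((ε i).comp (H i).subtype).prod (γ i)
    let Γ : Subgroup (G × K) := (⨆ i, (η i).range).topologicalClosure
    have hΓclosed : IsClosed (Γ : Set (G × K)) := Subgroup.isClosed_topologicalClosure _
    have hΓcompact : IsCompact (Γ : Set (G × K)) := hΓclosed.isCompact
    have hηΓ : ∀ i (x : ↥(H i)), η i x ∈ Γ := fun i x =>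
      Subgroup.le_topologicalClosure _ (Subgroup.mem_iSup_of_mem i ⟨x, rfl⟩)
    have hfstΓ : ∀ p : G × K, p ∈ Γ → p.1 ∈ S.topologicalClosure := by
      intro p hp
      have h1 : (⨆ i, (η i).range) ≤
          Subgroup.comap (MonoidHom.fst G K) S.topologicalClosure := by
        refine iSup_le fun i => ?_
        rintro - ⟨x, rfl⟩
        show ε i ↑x ∈ S.topologicalClosure
        exact Subgroup.le_topologicalClosure _
          (Subgroup.mem_iSup_of_mem i (Subgroup.mem_map_of_mem (ε i) x.2))
      have h2 : IsClosed ((Subgroup.comap (MonoidHom.fst G K) S.topologicalClosure :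
          Subgroup (G × K)) : Set (G × K)) :=
        (Subgroup.isClosed_topologicalClosure _).preimage continuous_fst
      exact Subgroup.topologicalClosure_minimal _ h1 h2 hp
    let eC : ↥Γ →* ↥S.topologicalClosure := MonoidHom.codRestrict
      ((MonoidHom.fst G K).comp Γ.subtype) _ (fun z => hfstΓ _ z.2)
    have heCcont : Continuous eC := ((continuous_fst.comp continuous_subtype_val).subtype_mk _)
    -- key injectivity statement, via the finite case
    have hkey : ∀ k : K, ((1 : G), k) ∈ Γ → k = 1 := by
      intro k hk
      by_contra hk1
      obtain ⟨N, hNnormal, hNopen, hNV⟩ := aux_exists_openNormal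
        (isOpen_compl_singleton (x := k)) (by simpa using Ne.symm hk1)
      haveI := hNnormal
      have hkN : k ∉ N := fun h => hNV h rfl
      haveI : DiscreteTopology (K ⧸ N) := QuotientGroup.discreteTopology hNopen
      haveI : Finite (K ⧸ N) := finite_of_compact_of_discrete
      obtain ⟨δ', hδ'cont, hδ'⟩ := finiteCase Gf G ε hfree H (K ⧸ N)
        (fun i => (QuotientGroup.mk' N).comp (γ i))
        (fun i => QuotientGroup.continuous_mk.comp (hγ i))
      let α : ↥Γ →* K ⧸ N := δ'.comp eC
      let β : ↥Γ →* K ⧸ N := (QuotientGroup.mk' N).comp ((MonoidHom.snd G K).comp Γ.subtype)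
      have hαβ : α = β := by
        refine aux_dense_ext (⨆ i, (η i).range) α β (hδ'cont.comp heCcont)
          (QuotientGroup.continuous_mk.comp (continuous_snd.comp continuous_subtype_val)) ?_
        intro p hp
        refine Subgroup.iSup_induction' (fun i => (η i).range)
          (C := fun q hq => α ⟨q, Subgroup.le_topologicalClosure _ hq⟩
            = β ⟨q, Subgroup.le_topologicalClosure _ hq⟩) ?_ ?_ ?_ hp
        · rintro i - ⟨x, rfl⟩
          exact hδ' i x _
        · exact (map_one α).trans (map_one β).symm
        · intro a c ha hc hCa hCc
          have h7 : (⟨a * c, Subgroup.le_topologicalClosure _ (mul_mem ha hc)⟩ : ↥Γ)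
              = ⟨a, Subgroup.le_topologicalClosure _ ha⟩
                * ⟨c, Subgroup.le_topologicalClosure _ hc⟩ := Subtype.ext rfl
          rw [h7, map_mul, map_mul, hCa, hCc]
      have h4 := DFunLike.congr_fun hαβ ⟨((1 : G), k), hk⟩
      have h5 : eC ⟨((1 : G), k), hk⟩ = 1 := Subtype.ext rfl
      have h6 : (1 : K ⧸ N) = QuotientGroup.mk k := by
        rw [show α ⟨((1 : G), k), hk⟩ = δ' (eC ⟨((1 : G), k), hk⟩) from rfl, h5, map_one] at h4
        exact h4
      exact hkN ((QuotientGroup.eq_one_iff k).mp h6.symm)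
    -- surjectivity of eC
    have hCfst : S.topologicalClosure ≤ Subgroup.map (MonoidHom.fst G K) Γ := by
      refine Subgroup.topologicalClosure_minimal _ ?_ ?_
      · refine iSup_le fun i => ?_
        rintro - ⟨x, hx, rfl⟩
        exact ⟨η i ⟨x, hx⟩, hηΓ i ⟨x, hx⟩, rfl⟩
      · have h8 : IsCompact (Prod.fst '' (Γ : Set (G × K))) := hΓcompact.image continuous_fst
        exact h8.isClosed
    have heCsurj : Function.Surjective eC := by
      intro y
      obtain ⟨p, hpΓ, hp1⟩ := hCfst y.2
      exact ⟨⟨p, hpΓ⟩, Subtype.ext hp1⟩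
    have heCinj : Function.Injective eC := by
      intro z w hzw
      have h1 : (z : G × K).1 = (w : G × K).1 := congrArg Subtype.val hzw
      have h2 : ((z * w⁻¹ : ↥Γ) : G × K).1 = 1 := by
        show (z : G × K).1 * ((w : G × K).1)⁻¹ = 1
        rw [h1]
        simp
      have h3 : ((z * w⁻¹ : ↥Γ) : G × K)
          = ((1 : G), ((z * w⁻¹ : ↥Γ) : G × K).2) := Prod.ext h2 rfl
      have h4 : ((z * w⁻¹ : ↥Γ) : G × K).2 = 1 := hkey _ (by rw [← h3]; exact (z * w⁻¹).2)
      have h5 : ((z * w⁻¹ : ↥Γ) : G × K) = 1 := by rw [h3, h4]; rfl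
      exact mul_inv_eq_one.mp (Subtype.ext h5)
    let e := MulEquiv.ofBijective eC ⟨heCinj, heCsurj⟩
    haveI : CompactSpace ↥Γ := isCompact_iff_compactSpace.mp hΓcompact
    have hesymm : Continuous ⇑e.symm :=
      Continuous.continuous_symm_of_equiv_compact_to_t2 (f := e.toEquiv) heCcont
    let δ : ↥S.topologicalClosure →* K :=
      ((MonoidHom.snd G K).comp Γ.subtype).comp e.symm.toMonoidHom
    have hδcont : Continuous δ := (continuous_snd.comp continuous_subtype_val).comp hesymm
    have hδcomm : ∀ i (x : ↥(H i)) (hx : ε i ↑x ∈ S.topologicalClosure),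
        δ ⟨ε i ↑x, hx⟩ = γ i x := by
      intro i x hx
      have h1 : e ⟨η i x, hηΓ i x⟩ = ⟨ε i ↑x, hx⟩ := Subtype.ext rfl
      have h2 : e.symm ⟨ε i ↑x, hx⟩ = ⟨η i x, hηΓ i x⟩ := by
        rw [← h1, MulEquiv.symm_apply_apply]
      show ((e.symm ⟨ε i ↑x, hx⟩ : ↥Γ) : G × K).2 = γ i x
      rw [h2]
      rfl
    refine ⟨δ, ⟨hδcont, ?_⟩, ?_⟩
    · intro i
      ext x
      exact hδcomm i x _
    · rintro δ₂ ⟨hδ₂cont, hδ₂comm⟩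
      refine aux_dense_ext S δ₂ δ hδ₂cont hδcont ?_
      intro p hp
      refine Subgroup.iSup_induction' (fun i => (H i).map (ε i))
        (C := fun q hq => δ₂ ⟨q, Subgroup.le_topologicalClosure _ hq⟩
          = δ ⟨q, Subgroup.le_topologicalClosure _ hq⟩) ?_ ?_ ?_ hp
      · rintro i - ⟨x, hx, rfl⟩
        have h9 := DFunLike.congr_fun (hδ₂comm i) (⟨x, hx⟩ : ↥(H i))
        exact h9.trans (hδcomm i ⟨x, hx⟩ _).symm
      · exact (map_one δ₂).trans (map_one δ).symm
      · intro a c ha hc hCa hCc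
        have h7 : (⟨a * c, Subgroup.le_topologicalClosure _ (mul_mem ha hc)⟩ :
            ↥S.topologicalClosure)
            = ⟨a, Subgroup.le_topologicalClosure _ ha⟩
              * ⟨c, Subgroup.le_topologicalClosure _ hc⟩ := Subtype.ext rfl
        rw [h7, map_mul, map_mul, hCa, hCc]
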